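/- Consider a finite MDP with state set S, action set A, reward function R with 0 ≤ R ≤ R_max, and discount factor γ ∈ [0,1). Let n : S × A × S → ℕ be visit counts with n(s,a) ≥ m ≥ 1 for all (s,a), let P̂ be the empirical model, let h ∈ ℕ, and let M_h(s,a) be the h-reachable model sets under the sample-mean update rule. Suppose Ṽ satisfies the optimistic Bellman equation Ṽ(s) = max_{a} max_{Q ∈ M_h(s,a)} Σ_{s'} Q(s')·(R(s,a,s') + γ·Ṽ(s')), and V̂ satisfies the Bellman optimality equation for the empirical kernel P̂. Then for every s ∈ S: 0 ≤ Ṽ(s) − V̂(s) ≤ (2h/(m + h)) · R_max/(1−γ)². -/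

import Mathlib

open Finset

/-- The set of h-reachable models at (s,a) under the sample-mean update rule. -/
def reachableModels {S A : Type*} [Fintype S] (n : S → A → S → ℕ) (h : ℕ)
    (s : S) (a : A) : Set (S → ℝ) :=
  {Q | ∃ m' : S → ℕ, (∑ s', m' s') = h ∧
    ∀ s', Q s' = ((n s a s' : ℝ) + (m' s' : ℝ)) / (((∑ s'', n s a s'' : ℕ) : ℝ) + (h : ℝ))}

set_option maxHeartbeats 1000000 in
/-- The internal optimistic value Ṽ of Algorithm 1 and the estimated value V̂ (the optimal
value of the empirical model) satisfy 0 ≤ Ṽ(s) − V̂(s) ≤ (2h/(m+h))·R_max/(1−γ)² once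
every state-action pair has at least m samples. -/
theorem optimistic_value_gap {S A : Type*} [Fintype S] [Fintype A] [Nonempty S] [Nonempty A]
    (R : S → A → S → ℝ) (R_max : ℝ) (hRmax : 0 < R_max)
    (hR : ∀ s a s', 0 ≤ R s a s' ∧ R s a s' ≤ R_max)
    (γ : ℝ) (hγ : γ ∈ Set.Ico (0 : ℝ) 1)
    (n : S → A → S → ℕ) (m : ℕ) (hm : 1 ≤ m)
    (hn : ∀ s a, m ≤ ∑ s', n s a s') (h : ℕ)
    (Vtilde : S → ℝ)
    (hopt : ∀ s, IsGreatest
      {x : ℝ | ∃ a : A, ∃ Q ∈ reachableModels n h s a,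
        x = ∑ s', Q s' * (R s a s' + γ * Vtilde s')} (Vtilde s))
    (Vhat : S → ℝ)
    (hbell : ∀ s, Vhat s =
      univ.sup' univ_nonempty (fun a => ∑ s',
        ((n s a s' : ℝ) / ((∑ s'', n s a s'' : ℕ) : ℝ)) * (R s a s' + γ * Vhat s'))) :
    ∀ s, 0 ≤ Vtilde s - Vhat s ∧
      Vtilde s - Vhat s ≤ (2 * (h : ℝ) / ((m : ℝ) + (h : ℝ))) * R_max / (1 - γ) ^ 2 := by
  obtain ⟨hγ0, hγ1⟩ := hγ
  have h1γ : (0:ℝ) < 1 - γ := by linarith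
  -- positivity of counts
  have hNpos : ∀ s a, (0:ℝ) < ((∑ s'', n s a s'' : ℕ) : ℝ) := by
    intro s a
    have : (1:ℕ) ≤ ∑ s'', n s a s'' := le_trans hm (hn s a)
    exact_mod_cast Nat.lt_of_lt_of_le Nat.zero_lt_one this
  have hNhpos : ∀ s a, (0:ℝ) < ((∑ s'', n s a s'' : ℕ) : ℝ) + (h:ℝ) := by
    intro s a
    have := hNpos s a
    have : (0:ℝ) ≤ (h:ℝ) := Nat.cast_nonneg h
    linarith [hNpos s a]
  -- properties of reachable models
  have hQnn : ∀ s a (Q : S → ℝ), Q ∈ reachableModels n h s a → ∀ s', 0 ≤ Q s' := by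
    rintro s a Q ⟨m', hm', hQ⟩ s'
    rw [hQ s']
    apply div_nonneg
    · positivity
    · exact le_of_lt (hNhpos s a)
  have hQsum : ∀ s a (Q : S → ℝ), Q ∈ reachableModels n h s a → ∑ s', Q s' = 1 := by
    rintro s a Q ⟨m', hm', hQ⟩
    have hsum : ∑ s', Q s' =
        (∑ s', ((n s a s' : ℝ) + (m' s' : ℝ))) / (((∑ s'', n s a s'' : ℕ) : ℝ) + (h:ℝ)) := by
      rw [Finset.sum_div]
      exact Finset.sum_congr rfl (fun s' _ => hQ s')
    rw [hsum, Finset.sum_add_distrib]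
    have h1 : ∑ s', ((n s a s' : ℝ)) = ((∑ s'', n s a s'' : ℕ) : ℝ) := by push_cast; ring
    have h2 : ∑ s', ((m' s' : ℝ)) = (h : ℝ) := by rw [← hm']; push_cast; ring
    rw [h1, h2, div_self (ne_of_gt (hNhpos s a))]
  -- bounds on Vtilde
  set MT : ℝ := univ.sup' univ_nonempty Vtilde with hMTdef
  set mT : ℝ := univ.inf' univ_nonempty Vtilde with hmTdef
  have hleMT : ∀ s, Vtilde s ≤ MT := fun s => Finset.le_sup' Vtilde (mem_univ s)
  have hmTle : ∀ s, mT ≤ Vtilde s := fun s => Finset.inf'_le Vtilde (mem_univ s)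
  have hMT : MT ≤ R_max / (1 - γ) := by
    obtain ⟨smax, -, hsmax⟩ := Finset.exists_mem_eq_sup' univ_nonempty Vtilde
    obtain ⟨a, Q, hQmem, heq⟩ := (hopt smax).1
    have hub : Vtilde smax ≤ R_max + γ * MT := by
      rw [heq]
      calc ∑ s', Q s' * (R smax a s' + γ * Vtilde s')
          ≤ ∑ s', Q s' * (R_max + γ * MT) := by
            apply Finset.sum_le_sum
            intro s' _
            apply mul_le_mul_of_nonneg_left _ (hQnn _ _ _ hQmem s')
            have := (hR smax a s').2
            have := hleMT s'
            nlinarith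
        _ = R_max + γ * MT := by
            rw [← Finset.sum_mul, hQsum _ _ _ hQmem, one_mul]
    have hMTe : MT = Vtilde smax := hsmax
    rw [hMTe] at *
    rw [le_div_iff₀ h1γ]
    nlinarith
  have hmT : 0 ≤ mT := by
    obtain ⟨smin, -, hsmin⟩ := Finset.exists_mem_eq_inf' univ_nonempty Vtilde
    obtain ⟨a, Q, hQmem, heq⟩ := (hopt smin).1
    have hlb : γ * mT ≤ Vtilde smin := by
      rw [heq]
      calc γ * mT = ∑ s', Q s' * (γ * mT) := by
            rw [← Finset.sum_mul, hQsum _ _ _ hQmem, one_mul]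
        _ ≤ ∑ s', Q s' * (R smin a s' + γ * Vtilde s') := by
            apply Finset.sum_le_sum
            intro s' _
            apply mul_le_mul_of_nonneg_left _ (hQnn _ _ _ hQmem s')
            have := (hR smin a s').1
            have := hmTle s'
            nlinarith
    have hmTe : mT = Vtilde smin := hsmin
    nlinarith [hmTe ▸ hlb]
  have hVtnn : ∀ s, 0 ≤ Vtilde s := fun s => le_trans hmT (hmTle s)
  have hVtub : ∀ s, Vtilde s ≤ R_max / (1 - γ) := fun s => le_trans (hleMT s) hMT
  -- the gap function
  set G : S → ℝ := fun s => Vtilde s - Vhat s with hGdef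
  set d : ℝ := univ.inf' univ_nonempty G with hddef
  set D : ℝ := univ.sup' univ_nonempty G with hDdef
  have hdle : ∀ s, d ≤ G s := fun s => Finset.inf'_le G (mem_univ s)
  have hleD : ∀ s, G s ≤ D := fun s => Finset.le_sup' G (mem_univ s)
  -- lower bound : 0 ≤ d
  classical
  have hd0 : 0 ≤ d := by
    obtain ⟨s0, -, hs0⟩ := Finset.exists_mem_eq_inf' univ_nonempty G
    -- the action achieving Vhat s0
    obtain ⟨a0, -, ha0⟩ := Finset.exists_mem_eq_sup' univ_nonempty
      (fun a => ∑ s', ((n s0 a s' : ℝ) / ((∑ s'', n s0 a s'' : ℕ) : ℝ)) *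
        (R s0 a s' + γ * Vhat s'))
    have hVh0 : Vhat s0 = ∑ s', ((n s0 a0 s' : ℝ) / ((∑ s'', n s0 a0 s'' : ℕ) : ℝ)) *
        (R s0 a0 s' + γ * Vhat s') := by rw [hbell s0, ha0]
    -- best successor under f = R + γ Vtilde
    set f : S → ℝ := fun s' => R s0 a0 s' + γ * Vtilde s' with hfdef
    obtain ⟨sstar, -, hsstar⟩ := Finset.exists_mem_eq_sup' univ_nonempty f
    have hfmax : ∀ s', f s' ≤ f sstar := by
      intro s'
      rw [← hsstar]
      exact Finset.le_sup' f (mem_univ s')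
    -- optimistic model
    set Qs : S → ℝ := fun s' => ((n s0 a0 s' : ℝ) + ((if s' = sstar then h else 0 : ℕ) : ℝ)) /
      (((∑ s'', n s0 a0 s'' : ℕ) : ℝ) + (h : ℝ)) with hQsdef
    have hQsmem : Qs ∈ reachableModels n h s0 a0 := by
      refine ⟨fun s' => if s' = sstar then h else 0, ?_, fun s' => rfl⟩
      simp [Finset.sum_ite_eq' univ sstar]
    have hVt0 : ∑ s', Qs s' * f s' ≤ Vtilde s0 :=
      (hopt s0).2 ⟨a0, Qs, hQsmem, rfl⟩
    set Nr : ℝ := ((∑ s'', n s0 a0 s'' : ℕ) : ℝ) with hNrdef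
    have hNrpos : 0 < Nr := hNpos s0 a0
    have hNrhpos : 0 < Nr + (h:ℝ) := hNhpos s0 a0
    -- compute the optimistic sum
    have hsumQ : ∑ s', Qs s' * f s' =
        ((∑ s', (n s0 a0 s' : ℝ) * f s') + (h:ℝ) * f sstar) / (Nr + (h:ℝ)) := by
      have hterm : ∀ s', Qs s' * f s' =
          ((n s0 a0 s' : ℝ) * f s' + (if s' = sstar then (h:ℝ) * f s' else 0)) / (Nr + (h:ℝ)) := by
        intro s'
        rw [hQsdef]
        by_cases hc : s' = sstar <;> simp [hc] <;> ring
      rw [Finset.sum_congr rfl (fun s' _ => hterm s'), ← Finset.sum_div,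
        Finset.sum_add_distrib, Finset.sum_ite_eq' univ sstar]
      simp
    -- ∑ n f ≤ Nr * f sstar
    have hTle : (∑ s', (n s0 a0 s' : ℝ) * f s') ≤ Nr * f sstar := by
      calc (∑ s', (n s0 a0 s' : ℝ) * f s') ≤ ∑ s', (n s0 a0 s' : ℝ) * f sstar := by
            apply Finset.sum_le_sum
            intro s' _
            exact mul_le_mul_of_nonneg_left (hfmax s') (Nat.cast_nonneg _)
        _ = Nr * f sstar := by
            rw [← Finset.sum_mul, hNrdef]
            push_cast
            ring
    -- empirical sum ≤ optimistic sum
    have hkey : (∑ s', (n s0 a0 s' : ℝ) * f s') / Nr ≤ ∑ s', Qs s' * f s' := by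
      rw [hsumQ, div_le_div_iff₀ hNrpos hNrhpos]
      have hh0 : (0:ℝ) ≤ (h:ℝ) := Nat.cast_nonneg h
      nlinarith [hTle]
    -- empirical with Vtilde ≥ empirical with Vhat + γ d
    have hemp : Vhat s0 + γ * d ≤ (∑ s', (n s0 a0 s' : ℝ) * f s') / Nr := by
      have hsum2 : (∑ s', (n s0 a0 s' : ℝ) * f s') / Nr =
          ∑ s', ((n s0 a0 s' : ℝ) / Nr) * f s' := by
        rw [Finset.sum_div]
        exact Finset.sum_congr rfl (fun s' _ => by ring)
      rw [hsum2, hVh0]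
      have hPsum : ∑ s', (n s0 a0 s' : ℝ) / Nr = 1 := by
        have hsum : ∑ s', (n s0 a0 s' : ℝ) = Nr := by rw [hNrdef]; push_cast; ring
        rw [← Finset.sum_div, hsum, div_self (ne_of_gt hNrpos)]
      calc (∑ s', ((n s0 a0 s' : ℝ) / Nr) * (R s0 a0 s' + γ * Vhat s')) + γ * d
          = ∑ s', ((n s0 a0 s' : ℝ) / Nr) * (R s0 a0 s' + γ * Vhat s' + γ * d) := by
            rw [Finset.sum_congr rfl (fun s' _ => by ring : ∀ s' ∈ univ,
              ((n s0 a0 s' : ℝ) / Nr) * (R s0 a0 s' + γ * Vhat s' + γ * d) =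
              ((n s0 a0 s' : ℝ) / Nr) * (R s0 a0 s' + γ * Vhat s') +
              ((n s0 a0 s' : ℝ) / Nr) * (γ * d)), Finset.sum_add_distrib,
              ← Finset.sum_mul, hPsum]
            ring
        _ ≤ ∑ s', ((n s0 a0 s' : ℝ) / Nr) * f s' := by
            apply Finset.sum_le_sum
            intro s' _
            apply mul_le_mul_of_nonneg_left _ (by positivity)
            have hds' := hdle s'
            simp only [hGdef] at hds'
            simp only [hfdef]
            nlinarith
    have hfinal : Vhat s0 + γ * d ≤ Vtilde s0 := le_trans hemp (le_trans hkey hVt0)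
    have hdeq : d = Vtilde s0 - Vhat s0 := hs0
    nlinarith
  -- upper bound : D ≤ h/(m+h) * R_max/(1-γ)²
  have hfub : ∀ s a s', R s a s' + γ * Vtilde s' ≤ R_max / (1 - γ) := by
    intro s a s'
    have h1 := (hR s a s').2
    have h2 := mul_le_mul_of_nonneg_left (hVtub s') hγ0
    have hB : R_max + γ * (R_max / (1 - γ)) = R_max / (1 - γ) := by
      field_simp
      ring
    linarith
  have hfnn : ∀ s a s', 0 ≤ R s a s' + γ * Vtilde s' := by
    intro s a s'
    have := (hR s a s').1
    have := hVtnn s'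
    nlinarith
  have hD : D ≤ ((h:ℝ) / ((m:ℝ) + (h:ℝ))) * (R_max / (1 - γ)) / (1 - γ) := by
    obtain ⟨s1, -, hs1⟩ := Finset.exists_mem_eq_sup' univ_nonempty G
    obtain ⟨a1, Q, hQmem, heq⟩ := (hopt s1).1
    obtain ⟨m', hm'sum, hQ⟩ := hQmem
    -- Vhat s1 ≥ empirical value with action a1
    have hVh1 : ∑ s', ((n s1 a1 s' : ℝ) / ((∑ s'', n s1 a1 s'' : ℕ) : ℝ)) *
        (R s1 a1 s' + γ * Vhat s') ≤ Vhat s1 := by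
      rw [hbell s1]
      exact Finset.le_sup' (fun a => ∑ s', ((n s1 a s' : ℝ) / ((∑ s'', n s1 a s'' : ℕ) : ℝ)) *
        (R s1 a s' + γ * Vhat s')) (mem_univ a1)
    set Nr : ℝ := ((∑ s'', n s1 a1 s'' : ℕ) : ℝ) with hNrdef
    have hNrpos : 0 < Nr := hNpos s1 a1
    have hNrhpos : 0 < Nr + (h:ℝ) := hNhpos s1 a1
    have hNrm : (m:ℝ) ≤ Nr := by
      rw [hNrdef]; exact_mod_cast hn s1 a1
    have hmh : (0:ℝ) < (m:ℝ) + (h:ℝ) := by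
      have : (1:ℝ) ≤ (m:ℝ) := by exact_mod_cast hm
      have : (0:ℝ) ≤ (h:ℝ) := Nat.cast_nonneg h
      linarith
    set f : S → ℝ := fun s' => R s1 a1 s' + γ * Vtilde s' with hfdef
    -- decompose optimistic sum
    have hsplit : ∑ s', Q s' * f s' =
        (∑ s', (n s1 a1 s' : ℝ) * f s') / (Nr + (h:ℝ)) +
        (∑ s', (m' s' : ℝ) * f s') / (Nr + (h:ℝ)) := by
      rw [← add_div, ← Finset.sum_add_distrib, Finset.sum_div]
      apply Finset.sum_congr rfl
      intro s' _
      rw [hQ s', hfdef]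
      ring
    -- bound on the m' part
    have hm'bound : (∑ s', (m' s' : ℝ) * f s') ≤ (h:ℝ) * (R_max / (1 - γ)) := by
      calc (∑ s', (m' s' : ℝ) * f s') ≤ ∑ s', (m' s' : ℝ) * (R_max / (1 - γ)) := by
            apply Finset.sum_le_sum
            intro s' _
            exact mul_le_mul_of_nonneg_left (hfub s1 a1 s') (Nat.cast_nonneg _)
        _ = (h:ℝ) * (R_max / (1 - γ)) := by
            rw [← Finset.sum_mul, ← hm'sum]
            push_cast
            ring
    -- nonnegativity of the n part
    have hnfnn : 0 ≤ (∑ s', (n s1 a1 s' : ℝ) * f s') := by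
      apply Finset.sum_nonneg
      intro s' _
      exact mul_nonneg (Nat.cast_nonneg _) (hfnn s1 a1 s')
    -- empirical sum with Vtilde vs Vhat
    have hgap : ∑ s', ((n s1 a1 s' : ℝ) / Nr) * f s' ≤
        (∑ s', ((n s1 a1 s' : ℝ) / Nr) * (R s1 a1 s' + γ * Vhat s')) + γ * D := by
      have hPsum : ∑ s', (n s1 a1 s' : ℝ) / Nr = 1 := by
        have hsum : ∑ s', (n s1 a1 s' : ℝ) = Nr := by rw [hNrdef]; push_cast; ring
        rw [← Finset.sum_div, hsum, div_self (ne_of_gt hNrpos)]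
      have : ∑ s', ((n s1 a1 s' : ℝ) / Nr) * f s' ≤
          ∑ s', ((n s1 a1 s' : ℝ) / Nr) * (R s1 a1 s' + γ * Vhat s' + γ * D) := by
        apply Finset.sum_le_sum
        intro s' _
        apply mul_le_mul_of_nonneg_left _ (by positivity)
        have hDs' := hleD s'
        simp only [hGdef] at hDs'
        simp only [hfdef]
        nlinarith
      calc ∑ s', ((n s1 a1 s' : ℝ) / Nr) * f s'
          ≤ ∑ s', ((n s1 a1 s' : ℝ) / Nr) * (R s1 a1 s' + γ * Vhat s' + γ * D) := this
        _ = (∑ s', ((n s1 a1 s' : ℝ) / Nr) * (R s1 a1 s' + γ * Vhat s')) + γ * D := by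
            rw [Finset.sum_congr rfl (fun s' _ => by ring : ∀ s' ∈ univ,
              ((n s1 a1 s' : ℝ) / Nr) * (R s1 a1 s' + γ * Vhat s' + γ * D) =
              ((n s1 a1 s' : ℝ) / Nr) * (R s1 a1 s' + γ * Vhat s') +
              ((n s1 a1 s' : ℝ) / Nr) * (γ * D)), Finset.sum_add_distrib,
              ← Finset.sum_mul, hPsum]
            ring
    -- (∑ n f)/(Nr+h) ≤ (∑ n f)/Nr = ∑ (n/Nr) f
    have hshrink : (∑ s', (n s1 a1 s' : ℝ) * f s') / (Nr + (h:ℝ)) ≤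
        ∑ s', ((n s1 a1 s' : ℝ) / Nr) * f s' := by
      have heq2 : ∑ s', ((n s1 a1 s' : ℝ) / Nr) * f s' =
          (∑ s', (n s1 a1 s' : ℝ) * f s') / Nr := by
        rw [Finset.sum_div]
        exact Finset.sum_congr rfl (fun s' _ => by ring)
      rw [heq2]
      have hh0 : (0:ℝ) ≤ (h:ℝ) := Nat.cast_nonneg h
      gcongr
      linarith
    -- the m' part bound with denominators
    have hm'div : (∑ s', (m' s' : ℝ) * f s') / (Nr + (h:ℝ)) ≤
        ((h:ℝ) / ((m:ℝ) + (h:ℝ))) * (R_max / (1 - γ)) := by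
      have hRnn : 0 ≤ R_max / (1 - γ) := div_nonneg (le_of_lt hRmax) (le_of_lt h1γ)
      have hh0 : (0:ℝ) ≤ (h:ℝ) := Nat.cast_nonneg h
      have step1 : (∑ s', (m' s' : ℝ) * f s') / (Nr + (h:ℝ)) ≤
          ((h:ℝ) * (R_max / (1 - γ))) / (Nr + (h:ℝ)) := by gcongr
      have step2 : ((h:ℝ) * (R_max / (1 - γ))) / (Nr + (h:ℝ)) =
          ((h:ℝ) / (Nr + (h:ℝ))) * (R_max / (1 - γ)) := by ring
      have step3 : (h:ℝ) / (Nr + (h:ℝ)) ≤ (h:ℝ) / ((m:ℝ) + (h:ℝ)) := by gcongr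
      calc (∑ s', (m' s' : ℝ) * f s') / (Nr + (h:ℝ))
          ≤ ((h:ℝ) / (Nr + (h:ℝ))) * (R_max / (1 - γ)) := by rw [← step2]; exact step1
        _ ≤ ((h:ℝ) / ((m:ℝ) + (h:ℝ))) * (R_max / (1 - γ)) :=
            mul_le_mul_of_nonneg_right step3 hRnn
    -- put it together: D ≤ γ D + h/(m+h) * Rmax/(1-γ)
    have hDeq : D = Vtilde s1 - Vhat s1 := hs1
    have hchain : Vtilde s1 ≤ Vhat s1 + γ * D + ((h:ℝ) / ((m:ℝ) + (h:ℝ))) * (R_max / (1 - γ)) := by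
      rw [heq]
      calc ∑ s', Q s' * (R s1 a1 s' + γ * Vtilde s')
          = (∑ s', (n s1 a1 s' : ℝ) * f s') / (Nr + (h:ℝ)) +
            (∑ s', (m' s' : ℝ) * f s') / (Nr + (h:ℝ)) := hsplit
        _ ≤ (∑ s', ((n s1 a1 s' : ℝ) / Nr) * f s') +
            ((h:ℝ) / ((m:ℝ) + (h:ℝ))) * (R_max / (1 - γ)) := add_le_add hshrink hm'div
        _ ≤ ((∑ s', ((n s1 a1 s' : ℝ) / Nr) * (R s1 a1 s' + γ * Vhat s')) + γ * D) +
            ((h:ℝ) / ((m:ℝ) + (h:ℝ))) * (R_max / (1 - γ)) := by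
            exact add_le_add hgap le_rfl
        _ ≤ (Vhat s1 + γ * D) + ((h:ℝ) / ((m:ℝ) + (h:ℝ))) * (R_max / (1 - γ)) := by
            exact add_le_add (add_le_add hVh1 le_rfl) le_rfl
    have hlin : D * (1 - γ) ≤ ((h:ℝ) / ((m:ℝ) + (h:ℝ))) * (R_max / (1 - γ)) := by
      nlinarith
    rw [le_div_iff₀ h1γ]
    linarith
  -- conclude
  intro s
  constructor
  · have := hdle s
    simp only [hGdef] at this
    linarith
  · have hs := hleD s
    simp only [hGdef] at hs
    have hbd : ((h:ℝ) / ((m:ℝ) + (h:ℝ))) * (R_max / (1 - γ)) / (1 - γ) ≤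
        (2 * (h : ℝ) / ((m : ℝ) + (h : ℝ))) * R_max / (1 - γ) ^ 2 := by
      have hmh : (0:ℝ) < (m:ℝ) + (h:ℝ) := by
        have h1 : (1:ℝ) ≤ (m:ℝ) := by exact_mod_cast hm
        have h2 : (0:ℝ) ≤ (h:ℝ) := Nat.cast_nonneg h
        linarith
      have hh0 : (0:ℝ) ≤ (h:ℝ) := Nat.cast_nonneg h
      have hEq : ((h:ℝ) / ((m:ℝ) + (h:ℝ))) * (R_max / (1 - γ)) / (1 - γ) =
          ((h:ℝ) / ((m:ℝ) + (h:ℝ))) * R_max / (1 - γ) ^ 2 := by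
        rw [← mul_div_assoc, div_div, ← sq]
      have hY : (2 * (h:ℝ) / ((m:ℝ) + (h:ℝ))) * R_max / (1 - γ) ^ 2 =
          2 * (((h:ℝ) / ((m:ℝ) + (h:ℝ))) * R_max / (1 - γ) ^ 2) := by ring
      have hXnn : 0 ≤ ((h:ℝ) / ((m:ℝ) + (h:ℝ))) * R_max / (1 - γ) ^ 2 := by positivity
      rw [hEq, hY]
      linarith
    linarith
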